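/- Let 1 ≤ p < ∞ and 0 < s < 1. Let E ⊂ X be a closed set, z ∈ E, r > 0, and let F be the truncated set obtained from E, z, r by the truncation construction. Let σ ≥ 1 and κ ≥ 2. Then there exist constants C₁ > 0, depending only on s, c_μ, p, σ, κ, and C₂ = 1 + 3^p κ^{sp} C(c_μ,σ) (with C(c_μ,σ) depending only on c_μ and σ), such that for every Lipschitz function u : X → ℝ with u = 0 on F one has ∫_{B(z,σκr)\F} |u(x)|^p dist(x,F)^{−sp} dμ(x) ≤ C₁ ∫_{B(z,σκr)} ∫_{B(z,σκr)} |u(x)−u(y)|^p / (d(x,y)^{sp} μ(B(x,d(x,y)))) dμ(y) dμ(x) + C₂ ∫_{B(z,κr)\F} |u(x)|^p dist(x,F)^{−sp} dμ(x). -/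

import Mathlib

open Metric MeasureTheory Set
open scoped ENNReal NNReal

/-- The effective diameter bound: `diam E`, unless `diam E = 0`, in which case `diam X`. -/
noncomputable def diamBound {X : Type*} [PseudoEMetricSpace X] (E : Set X) : ℝ≥0∞ :=
  haveI := Classical.propDecidable
  if EMetric.diam E = 0 then EMetric.diam (Set.univ : Set X) else EMetric.diam E

/-- The truncation sequence: `F₀ = E ∩ closedBall z (r/2)` and recursively
`F_{j+1} = ⋃_{x ∈ F_j} E ∩ closedBall x (r / 2^(j+2))`. -/
def truncSeq {X : Type*} [MetricSpace X] (E : Set X) (z : X) (r : ℝ) : ℕ → Set X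
  | 0 => E ∩ closedBall z (r / 2)
  | j + 1 => ⋃ x ∈ truncSeq E z r j, E ∩ closedBall x (r / 2 ^ (j + 2))

/-- The truncated set `F`, the closure of the union of the truncation sequence. -/
def truncSet {X : Type*} [MetricSpace X] (E : Set X) (z : X) (r : ℝ) : Set X :=
  closure (⋃ j : ℕ, truncSeq E z r j)

/-- The fractional `(s,p)`-Gagliardo kernel `|u x - u y|^p / (d(x,y)^{sp} μ(B(x,d(x,y))))`. -/
noncomputable def fracKernel {X : Type*} [MetricSpace X] [MeasurableSpace X]
    (μ : Measure X) (s p : ℝ) (u : X → ℝ) (x y : X) : ℝ≥0∞ :=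
  ENNReal.ofReal (|u x - u y| ^ p) /
    (ENNReal.ofReal (dist x y ^ (s * p)) * μ (ball x (dist x y)))

lemma truncSeq_subset_closedBall' {X : Type*} [MetricSpace X] (E : Set X) (z : X) (r : ℝ) :
    ∀ j, truncSeq E z r j ⊆ closedBall z (r - r / 2 ^ (j + 1)) := by
  intro j
  induction j with
  | zero =>
    intro x hx
    have h := hx.2
    simp only [mem_closedBall] at h ⊢
    norm_num
    linarith
  | succ j ih =>
    intro x hx
    simp only [truncSeq, mem_iUnion] at hx
    obtain ⟨y, hy, _, hxy⟩ := hx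
    have h1 : dist x y ≤ r / 2 ^ (j + 2) := by simpa [mem_closedBall] using hxy
    have h2 : dist y z ≤ r - r / 2 ^ (j + 1) := ih hy
    have h3 : dist x z ≤ dist x y + dist y z := dist_triangle x y z
    simp only [mem_closedBall]
    have h5 : r / 2 ^ (j + 2) + (r - r / 2 ^ (j + 1)) = r - r / 2 ^ (j + 1 + 1) := by
      have h4 : (2:ℝ) ^ (j + 2) = 2 * 2 ^ (j + 1) := by ring
      have h6 : (2:ℝ) ^ (j + 1) ≠ 0 := by positivity
      field_simp
      ring
    linarith

lemma truncSet_subset_closedBall {X : Type*} [MetricSpace X] (E : Set X) (z : X) {r : ℝ}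
    (hr : 0 < r) : truncSet E z r ⊆ closedBall z r := by
  refine closure_minimal (iUnion_subset fun j => (truncSeq_subset_closedBall' E z r j).trans
    (closedBall_subset_closedBall ?_)) isClosed_closedBall
  have : 0 ≤ r / 2 ^ (j + 1) := by positivity
  linarith

lemma mem_truncSet_self {X : Type*} [MetricSpace X] {E : Set X} {z : X} (hz : z ∈ E) {r : ℝ}
    (hr : 0 < r) : z ∈ truncSet E z r := by
  refine subset_closure (mem_iUnion.2 ⟨0, ⟨hz, ?_⟩⟩)
  simp only [mem_closedBall, dist_self]
  positivity

lemma doubling_iter {X : Type*} [MetricSpace X] [MeasurableSpace X] (μ : Measure X) (c_μ : ℝ)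
    (hdoubling : ∀ (x : X) (ρ : ℝ), 0 < ρ →
      μ (ball x (2 * ρ)) ≤ ENNReal.ofReal c_μ * μ (ball x ρ)) :
    ∀ (x : X) (ρ : ℝ), 0 < ρ → ∀ n : ℕ,
      μ (ball x (2 ^ n * ρ)) ≤ ENNReal.ofReal c_μ ^ n * μ (ball x ρ) := by
  intro x ρ hρ n
  induction n with
  | zero => simp
  | succ n ih =>
    have h1 : (2:ℝ) ^ (n + 1) * ρ = 2 * (2 ^ n * ρ) := by ring
    calc μ (ball x ((2:ℝ) ^ (n + 1) * ρ)) = μ (ball x (2 * ((2:ℝ) ^ n * ρ))) := by rw [h1]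
      _ ≤ ENNReal.ofReal c_μ * μ (ball x ((2:ℝ) ^ n * ρ)) := hdoubling x _ (by positivity)
      _ ≤ ENNReal.ofReal c_μ * (ENNReal.ofReal c_μ ^ n * μ (ball x ρ)) := mul_le_mul_right ih _
      _ = ENNReal.ofReal c_μ ^ (n + 1) * μ (ball x ρ) := by ring

lemma rpow_le_two_rpow_add {p a b c : ℝ} (hp : 1 ≤ p) (ha : 0 ≤ a) (hb : 0 ≤ b) (hc : 0 ≤ c)
    (h : c ≤ a + b) : c ^ p ≤ 2 ^ p * (a ^ p + b ^ p) := by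
  have hp0 : (0:ℝ) ≤ p := le_trans zero_le_one hp
  have h2 : (0:ℝ) < 2 ^ p := Real.rpow_pos_of_pos two_pos p
  rcases le_total a b with hab | hab
  · have h1 : c ^ p ≤ (2 * b) ^ p := Real.rpow_le_rpow hc (by linarith) hp0
    have h3 : (2 * b : ℝ) ^ p = 2 ^ p * b ^ p := Real.mul_rpow (by norm_num) hb
    have h4 : 0 ≤ a ^ p := Real.rpow_nonneg ha p
    nlinarith
  · have h1 : c ^ p ≤ (2 * a) ^ p := Real.rpow_le_rpow hc (by linarith) hp0
    have h3 : (2 * a : ℝ) ^ p = 2 ^ p * a ^ p := Real.mul_rpow (by norm_num) ha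
    have h4 : 0 ≤ b ^ p := Real.rpow_nonneg hb p
    nlinarith

/-- Hole-filling lemma. -/
theorem truncSet_hole_filling {X : Type*} [MetricSpace X] [MeasurableSpace X] [BorelSpace X]
    [Nontrivial X]
    (μ : Measure X) (c_μ : ℝ) (hc : 1 < c_μ)
    (hball : ∀ (x : X) (ρ : ℝ), 0 < ρ → 0 < μ (ball x ρ) ∧ μ (ball x ρ) < ⊤)
    (hdoubling : ∀ (x : X) (ρ : ℝ), 0 < ρ →
      μ (ball x (2 * ρ)) ≤ ENNReal.ofReal c_μ * μ (ball x ρ))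
    (p s : ℝ) (hp : 1 ≤ p) (hs0 : 0 < s) (hs1 : s < 1)
    (σ κ : ℝ) (hσ : 1 ≤ σ) (hκ : 2 ≤ κ) :
    ∃ C₁ C₃ : ℝ, 0 < C₁ ∧ 0 < C₃ ∧
      ∀ (E : Set X), IsClosed E → ∀ z ∈ E, ∀ r : ℝ, 0 < r →
        ∀ u : X → ℝ, (∃ L : ℝ≥0, LipschitzWith L u) →
          (∀ x ∈ truncSet E z r, u x = 0) →
          (∫⁻ x in ball z (σ * κ * r) \ truncSet E z r,
              ENNReal.ofReal (|u x| ^ p) /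
                ENNReal.ofReal (infDist x (truncSet E z r) ^ (s * p)) ∂μ) ≤
            ENNReal.ofReal C₁ *
                ∫⁻ x in ball z (σ * κ * r),
                  ∫⁻ y in ball z (σ * κ * r), fracKernel μ s p u x y ∂μ ∂μ +
              ENNReal.ofReal (1 + 3 ^ p * κ ^ (s * p) * C₃) *
                ∫⁻ x in ball z (κ * r) \ truncSet E z r,
                  ENNReal.ofReal (|u x| ^ p) /
                    ENNReal.ofReal (infDist x (truncSet E z r) ^ (s * p)) ∂μ := by
  have hp0 : (0:ℝ) < p := lt_of_lt_of_le one_pos hp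
  have hsp : (0:ℝ) < s * p := mul_pos hs0 hp0
  have hσ0 : (0:ℝ) < σ := lt_of_lt_of_le one_pos hσ
  have hκ0 : (0:ℝ) < κ := lt_of_lt_of_le two_pos hκ
  have hc0 : (0:ℝ) < c_μ := lt_trans one_pos hc
  set N : ℕ := ⌈σ⌉₊ + 2 with hN
  have hσ2N : 4 * σ ≤ 2 ^ N := by
    have h1 : σ ≤ (⌈σ⌉₊ : ℝ) := Nat.le_ceil σ
    have h2 : (⌈σ⌉₊ : ℝ) ≤ 2 ^ (⌈σ⌉₊ : ℕ) := by exact_mod_cast Nat.lt_two_pow_self.le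
    have h3 : (2:ℝ) ^ N = 4 * 2 ^ (⌈σ⌉₊ : ℕ) := by rw [hN]; ring
    nlinarith
  refine ⟨2 ^ p * (2 * σ * κ) ^ (s * p) * c_μ ^ N, c_μ ^ N, by positivity, by positivity, ?_⟩
  intro E hE z hz r hr u hLip hu0
  obtain ⟨L, hL⟩ := hLip
  have hu_c : Continuous u := hL.continuous
  have hκr : (0:ℝ) < κ * r := by positivity
  have hσκr : (0:ℝ) < σ * κ * r := by positivity
  set F := truncSet E z r with hFdef
  have hzF : z ∈ F := mem_truncSet_self hz hr
  have hFne : F.Nonempty := ⟨z, hzF⟩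
  have hFclosed : IsClosed F := isClosed_closure
  have hFball : F ⊆ closedBall z r := truncSet_subset_closedBall E z hr
  set B := ball z (σ * κ * r) with hB
  set Bκ := ball z (κ * r) with hBκ
  have hBκB : Bκ ⊆ B := ball_subset_ball (by nlinarith)
  have hμBκ0 : μ Bκ ≠ 0 := (hball z _ hκr).1.ne'
  have hμBκtop : μ Bκ ≠ ⊤ := (hball z _ hκr).2.ne
  set w : X → ℝ≥0∞ :=
    fun x => ENNReal.ofReal (|u x| ^ p) / ENNReal.ofReal (infDist x F ^ (s * p)) with hw
  have hw_m : Measurable w := by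
    rw [hw]; fun_prop
  have hrsp : (0:ℝ) < r ^ (s * p) := Real.rpow_pos_of_pos hr _
  set cR : ℝ≥0∞ := ENNReal.ofReal (r ^ (s * p)) with hcR
  have hcR0 : cR ≠ 0 := (ENNReal.ofReal_pos.2 hrsp).ne'
  have hcRtop : cR ≠ ⊤ := ENNReal.ofReal_ne_top
  set K : ℝ≥0∞ :=
    ENNReal.ofReal ((2 * σ * κ * r) ^ (s * p)) * (ENNReal.ofReal c_μ ^ N * μ Bκ) with hK
  set c1 : ℝ≥0∞ := ENNReal.ofReal (2 ^ p) * K with hc1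
  set c2 : ℝ≥0∞ := ENNReal.ofReal (2 ^ p) * ENNReal.ofReal ((κ * r) ^ (s * p)) with hc2
  have hc1top : c1 ≠ ⊤ := by
    rw [hc1, hK]
    exact ENNReal.mul_ne_top ENNReal.ofReal_ne_top
      (ENNReal.mul_ne_top ENNReal.ofReal_ne_top
        (ENNReal.mul_ne_top (ENNReal.pow_ne_top ENNReal.ofReal_ne_top) hμBκtop))
  have hc2top : c2 ≠ ⊤ := by
    rw [hc2]; exact ENNReal.mul_ne_top ENNReal.ofReal_ne_top ENNReal.ofReal_ne_top
  -- P4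
  have hP4 : ∀ y ∈ Bκ, ENNReal.ofReal (|u y| ^ p) ≤ ENNReal.ofReal ((κ * r) ^ (s * p)) * w y := by
    intro y hy
    by_cases hyF : y ∈ F
    · have : u y = 0 := hu0 y hyF
      simp [this, Real.zero_rpow hp0.ne']
    · have hd0 : 0 < infDist y F := (hFclosed.notMem_iff_infDist_pos hFne).1 hyF
      have hdle : infDist y F ≤ κ * r :=
        le_trans (infDist_le_dist_of_mem hzF) (le_of_lt (by simpa [hBκ, mem_ball] using hy))
      have hb0 : ENNReal.ofReal (infDist y F ^ (s * p)) ≠ 0 :=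
        (ENNReal.ofReal_pos.2 (Real.rpow_pos_of_pos hd0 _)).ne'
      have hbtop : ENNReal.ofReal (infDist y F ^ (s * p)) ≠ ⊤ := ENNReal.ofReal_ne_top
      have hble : ENNReal.ofReal (infDist y F ^ (s * p)) ≤ ENNReal.ofReal ((κ * r) ^ (s * p)) :=
        ENNReal.ofReal_le_ofReal (Real.rpow_le_rpow hd0.le hdle hsp.le)
      calc ENNReal.ofReal (|u y| ^ p)
          = w y * ENNReal.ofReal (infDist y F ^ (s * p)) :=
            (ENNReal.div_mul_cancel hb0 hbtop).symm
        _ ≤ w y * ENNReal.ofReal ((κ * r) ^ (s * p)) := mul_le_mul_right hble _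
        _ = ENNReal.ofReal ((κ * r) ^ (s * p)) * w y := mul_comm _ _
  -- P3
  have hP3 : ∀ x ∈ B, ∀ y ∈ Bκ,
      ENNReal.ofReal (|u x - u y| ^ p) ≤ K * fracKernel μ s p u x y := by
    intro x hx y hy
    by_cases hxy : x = y
    · subst hxy
      simp [Real.zero_rpow hp0.ne']
    · have hd : 0 < dist x y := dist_pos.2 hxy
      set D : ℝ≥0∞ := ENNReal.ofReal (dist x y ^ (s * p)) * μ (ball x (dist x y)) with hD
      have hD0 : D ≠ 0 := by
        rw [hD]
        exact mul_ne_zero (ENNReal.ofReal_pos.2 (Real.rpow_pos_of_pos hd _)).ne'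
          (hball x _ hd).1.ne'
      have hDtop : D ≠ ⊤ := by
        rw [hD]; exact ENNReal.mul_ne_top ENNReal.ofReal_ne_top (hball x _ hd).2.ne
      have hxz : dist x z < σ * κ * r := by simpa [hB, mem_ball] using hx
      have hyz : dist y z < κ * r := by simpa [hBκ, mem_ball] using hy
      have hdxy : dist x y ≤ 2 * σ * κ * r := by
        have h1 : dist x y ≤ dist x z + dist z y := dist_triangle x z y
        have h2 : dist z y = dist y z := dist_comm z y
        nlinarith
      have hsub : ball x (dist x y) ⊆ ball z ((2:ℝ) ^ N * (κ * r)) := by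
        intro v hv
        have h1 : dist v x < dist x y := by simpa [mem_ball] using hv
        have h2 : dist v z ≤ dist v x + dist x z := dist_triangle v x z
        have h3 : (3:ℝ) * σ * (κ * r) ≤ 2 ^ N * (κ * r) := by nlinarith
        simp only [mem_ball]
        nlinarith
      have hμb : μ (ball x (dist x y)) ≤ ENNReal.ofReal c_μ ^ N * μ Bκ :=
        le_trans (measure_mono hsub) (doubling_iter μ c_μ hdoubling z (κ * r) hκr N)
      have hDK : D ≤ K := by
        rw [hD, hK]
        exact mul_le_mul'
          (ENNReal.ofReal_le_ofReal (Real.rpow_le_rpow dist_nonneg hdxy hsp.le)) hμb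
      calc ENNReal.ofReal (|u x - u y| ^ p)
          = ENNReal.ofReal (|u x - u y| ^ p) / D * D := (ENNReal.div_mul_cancel hD0 hDtop).symm
        _ ≤ ENNReal.ofReal (|u x - u y| ^ p) / D * K := mul_le_mul_right hDK _
        _ = K * fracKernel μ s p u x y := by rw [fracKernel, ← hD]; ring
  -- P1
  have hP1 : ∀ x ∈ B \ Bκ, w x ≤ cR⁻¹ * ENNReal.ofReal (|u x| ^ p) := by
    intro x hx
    have hxz : κ * r ≤ dist x z := by
      by_contra hlt
      exact hx.2 (by simpa [hBκ, mem_ball] using lt_of_not_ge hlt)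
    have hinf : r ≤ infDist x F := by
      by_contra hlt
      obtain ⟨y, hyF, hylt⟩ := (infDist_lt_iff hFne).1 (lt_of_not_ge hlt)
      have h1 : dist y z ≤ r := by simpa [mem_closedBall] using hFball hyF
      have h2 : dist x z ≤ dist x y + dist y z := dist_triangle x y z
      nlinarith
    have hle : cR ≤ ENNReal.ofReal (infDist x F ^ (s * p)) :=
      ENNReal.ofReal_le_ofReal (Real.rpow_le_rpow hr.le hinf hsp.le)
    calc w x ≤ ENNReal.ofReal (|u x| ^ p) / cR := ENNReal.div_le_div_left hle _
      _ = cR⁻¹ * ENNReal.ofReal (|u x| ^ p) := by rw [ENNReal.div_eq_inv_mul]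
  -- P2
  have hP2 : ∀ x, ENNReal.ofReal (|u x| ^ p) ≤
      (μ Bκ)⁻¹ * ∫⁻ y in Bκ, ENNReal.ofReal (2 ^ p * (|u x - u y| ^ p + |u y| ^ p)) ∂μ := by
    intro x
    have hpt : ∀ y, ENNReal.ofReal (|u x| ^ p) ≤
        ENNReal.ofReal (2 ^ p * (|u x - u y| ^ p + |u y| ^ p)) := by
      intro y
      refine ENNReal.ofReal_le_ofReal ?_
      refine rpow_le_two_rpow_add hp (abs_nonneg _) (abs_nonneg _) (abs_nonneg _) ?_
      calc |u x| = |(u x - u y) + u y| := by ring_nf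
        _ ≤ |u x - u y| + |u y| := abs_add_le _ _
    have hconst : (μ Bκ)⁻¹ * (ENNReal.ofReal (|u x| ^ p) * μ Bκ) = ENNReal.ofReal (|u x| ^ p) := by
      rw [mul_comm (ENNReal.ofReal (|u x| ^ p)), ← mul_assoc,
        ENNReal.inv_mul_cancel hμBκ0 hμBκtop, one_mul]
    calc ENNReal.ofReal (|u x| ^ p)
        = (μ Bκ)⁻¹ * (ENNReal.ofReal (|u x| ^ p) * μ Bκ) := hconst.symm
      _ = (μ Bκ)⁻¹ * ∫⁻ _ in Bκ, ENNReal.ofReal (|u x| ^ p) ∂μ := by rw [setLIntegral_const]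
      _ ≤ (μ Bκ)⁻¹ * ∫⁻ y in Bκ, ENNReal.ofReal (2 ^ p * (|u x - u y| ^ p + |u y| ^ p)) ∂μ :=
          mul_le_mul_right (lintegral_mono hpt) _
  -- inner pointwise bound
  have hinnerpt : ∀ x ∈ B, ∀ y ∈ Bκ,
      ENNReal.ofReal (2 ^ p * (|u x - u y| ^ p + |u y| ^ p)) ≤
        c1 * fracKernel μ s p u x y + c2 * w y := by
    intro x hx y hy
    have h2p : (0:ℝ) ≤ 2 ^ p := (Real.rpow_pos_of_pos two_pos p).le
    rw [ENNReal.ofReal_mul h2p,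
      ENNReal.ofReal_add (Real.rpow_nonneg (abs_nonneg _) p) (Real.rpow_nonneg (abs_nonneg _) p),
      mul_add]
    refine add_le_add ?_ ?_
    · rw [hc1, mul_assoc]
      exact mul_le_mul_right (hP3 x hx y hy) _
    · rw [hc2, mul_assoc]
      exact mul_le_mul_right (hP4 y hy) _
  -- combined pointwise bound on annulus
  have hann : ∀ x ∈ B \ Bκ, w x ≤
      cR⁻¹ * ((μ Bκ)⁻¹ * ∫⁻ y in Bκ, (c1 * fracKernel μ s p u x y + c2 * w y) ∂μ) := by
    intro x hx
    calc w x ≤ cR⁻¹ * ENNReal.ofReal (|u x| ^ p) := hP1 x hx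
      _ ≤ cR⁻¹ * ((μ Bκ)⁻¹ *
            ∫⁻ y in Bκ, ENNReal.ofReal (2 ^ p * (|u x - u y| ^ p + |u y| ^ p)) ∂μ) :=
          mul_le_mul_right (hP2 x) _
      _ ≤ cR⁻¹ * ((μ Bκ)⁻¹ * ∫⁻ y in Bκ, (c1 * fracKernel μ s p u x y + c2 * w y) ∂μ) := by
          refine mul_le_mul_right (mul_le_mul_right ?_ _) _
          exact setLIntegral_mono' measurableSet_ball fun y hy => hinnerpt x hx.1 y hy
  set I : ℝ≥0∞ := ∫⁻ x in Bκ \ F, w x ∂μ with hI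
  set G : ℝ≥0∞ := ∫⁻ x in B, ∫⁻ y in B, fracKernel μ s p u x y ∂μ ∂μ with hG
  set IW : ℝ≥0∞ := ∫⁻ y in Bκ, w y ∂μ with hIW
  have hIWI : IW ≤ I := by
    have hF0 : ∫⁻ y in F, w y ∂μ = 0 := by
      have : ∫⁻ y in F, w y ∂μ = ∫⁻ _ in F, (0:ℝ≥0∞) ∂μ := by
        refine setLIntegral_congr_fun hFclosed.measurableSet (fun y hy => ?_)
        simp [hw, hu0 y hy, Real.zero_rpow hp0.ne']
      simp [this]
    calc IW ≤ ∫⁻ y in (Bκ \ F) ∪ F, w y ∂μ := by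
          refine lintegral_mono' (Measure.restrict_mono ?_ le_rfl) le_rfl
          intro y hy
          by_cases hyF : y ∈ F
          · exact Or.inr hyF
          · exact Or.inl ⟨hy, hyF⟩
      _ ≤ (∫⁻ y in Bκ \ F, w y ∂μ) + ∫⁻ y in F, w y ∂μ := lintegral_union_le _ _ _
      _ = I := by rw [hF0, add_zero, hI]
  have hinner : ∀ x, (∫⁻ y in Bκ, (c1 * fracKernel μ s p u x y + c2 * w y) ∂μ) =
      c1 * (∫⁻ y in Bκ, fracKernel μ s p u x y ∂μ) + c2 * IW := by
    intro x
    rw [lintegral_add_right _ (hw_m.const_mul c2), lintegral_const_mul' c1 _ hc1top,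
      lintegral_const_mul' c2 _ hc2top]
  -- integrate over the annulus
  have hannint : (∫⁻ x in B \ Bκ, w x ∂μ) ≤
      (cR⁻¹ * (μ Bκ)⁻¹) * (c1 * G + c2 * IW * (ENNReal.ofReal c_μ ^ N * μ Bκ)) := by
    have hAms : MeasurableSet (B \ Bκ) := measurableSet_ball.diff measurableSet_ball
    have hcrtop : cR⁻¹ * (μ Bκ)⁻¹ ≠ ⊤ :=
      ENNReal.mul_ne_top (ENNReal.inv_ne_top.2 hcR0) (ENNReal.inv_ne_top.2 hμBκ0)
    have step1 : (∫⁻ x in B \ Bκ, w x ∂μ) ≤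
        ∫⁻ x in B \ Bκ, (cR⁻¹ * (μ Bκ)⁻¹) *
          (c1 * (∫⁻ y in Bκ, fracKernel μ s p u x y ∂μ) + c2 * IW) ∂μ := by
      refine setLIntegral_mono' hAms fun x hx => ?_
      refine le_trans (hann x hx) (le_of_eq ?_)
      rw [hinner x]; ring
    have step2 : (∫⁻ x in B \ Bκ, (cR⁻¹ * (μ Bκ)⁻¹) *
        (c1 * (∫⁻ y in Bκ, fracKernel μ s p u x y ∂μ) + c2 * IW) ∂μ) =
        (cR⁻¹ * (μ Bκ)⁻¹) *
          ((∫⁻ x in B \ Bκ, c1 * (∫⁻ y in Bκ, fracKernel μ s p u x y ∂μ) ∂μ) +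
            c2 * IW * μ (B \ Bκ)) := by
      rw [lintegral_const_mul' _ _ hcrtop, lintegral_add_right _ measurable_const,
        setLIntegral_const]
    have step3 : (∫⁻ x in B \ Bκ, c1 * (∫⁻ y in Bκ, fracKernel μ s p u x y ∂μ) ∂μ) ≤ c1 * G := by
      rw [lintegral_const_mul' c1 _ hc1top]
      refine mul_le_mul_right ?_ _
      calc (∫⁻ x in B \ Bκ, ∫⁻ y in Bκ, fracKernel μ s p u x y ∂μ ∂μ)
          ≤ ∫⁻ x in B \ Bκ, ∫⁻ y in B, fracKernel μ s p u x y ∂μ ∂μ :=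
            lintegral_mono fun x => lintegral_mono' (Measure.restrict_mono hBκB le_rfl) le_rfl
        _ ≤ G := lintegral_mono' (Measure.restrict_mono diff_subset le_rfl) le_rfl
    have step4 : μ (B \ Bκ) ≤ ENNReal.ofReal c_μ ^ N * μ Bκ := by
      have hsub : B \ Bκ ⊆ ball z ((2:ℝ) ^ N * (κ * r)) := by
        refine diff_subset.trans (ball_subset_ball ?_)
        nlinarith
      exact le_trans (measure_mono hsub) (doubling_iter μ c_μ hdoubling z (κ * r) hκr N)
    calc (∫⁻ x in B \ Bκ, w x ∂μ) ≤ _ := step1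
      _ = _ := step2
      _ ≤ (cR⁻¹ * (μ Bκ)⁻¹) * (c1 * G + c2 * IW * (ENNReal.ofReal c_μ ^ N * μ Bκ)) := by
          refine mul_le_mul_right (add_le_add step3 (mul_le_mul_right step4 _)) _
  -- coefficient identities
  have hE1 : (cR⁻¹ * (μ Bκ)⁻¹) * c1 =
      ENNReal.ofReal (2 ^ p * (2 * σ * κ) ^ (s * p) * c_μ ^ N) := by
    have hsplit : ((2 * σ * κ * r : ℝ)) ^ (s * p) = (2 * σ * κ) ^ (s * p) * r ^ (s * p) := by
      rw [show (2 * σ * κ * r : ℝ) = (2 * σ * κ) * r from by ring,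
        Real.mul_rpow (by positivity) hr.le]
    have h1 : c1 = ENNReal.ofReal (2 ^ p) * (ENNReal.ofReal ((2 * σ * κ) ^ (s * p)) *
        (cR * (ENNReal.ofReal c_μ ^ N * μ Bκ))) := by
      rw [hc1, hK, hsplit, ENNReal.ofReal_mul (by positivity), hcR]; ring
    rw [h1, show (cR⁻¹ * (μ Bκ)⁻¹) * (ENNReal.ofReal (2 ^ p) *
        (ENNReal.ofReal ((2 * σ * κ) ^ (s * p)) * (cR * (ENNReal.ofReal c_μ ^ N * μ Bκ)))) =
        (cR⁻¹ * cR) * ((μ Bκ)⁻¹ * μ Bκ) *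
          (ENNReal.ofReal (2 ^ p) * ENNReal.ofReal ((2 * σ * κ) ^ (s * p)) *
            ENNReal.ofReal c_μ ^ N) from by ring,
      ENNReal.inv_mul_cancel hcR0 hcRtop, ENNReal.inv_mul_cancel hμBκ0 hμBκtop, one_mul, one_mul,
      ← ENNReal.ofReal_pow hc0.le, ← ENNReal.ofReal_mul (by positivity),
      ← ENNReal.ofReal_mul (by positivity)]
  have hE2 : (cR⁻¹ * (μ Bκ)⁻¹) * (c2 * (ENNReal.ofReal c_μ ^ N * μ Bκ)) =
      ENNReal.ofReal (2 ^ p * κ ^ (s * p) * c_μ ^ N) := by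
    have hsplit : ((κ * r : ℝ)) ^ (s * p) = κ ^ (s * p) * r ^ (s * p) := by
      rw [Real.mul_rpow hκ0.le hr.le]
    have h1 : c2 * (ENNReal.ofReal c_μ ^ N * μ Bκ) = ENNReal.ofReal (2 ^ p) *
        (ENNReal.ofReal (κ ^ (s * p)) * (cR * (ENNReal.ofReal c_μ ^ N * μ Bκ))) := by
      rw [hc2, hsplit, ENNReal.ofReal_mul (by positivity), hcR]; ring
    rw [h1, show (cR⁻¹ * (μ Bκ)⁻¹) * (ENNReal.ofReal (2 ^ p) *
        (ENNReal.ofReal (κ ^ (s * p)) * (cR * (ENNReal.ofReal c_μ ^ N * μ Bκ)))) =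
        (cR⁻¹ * cR) * ((μ Bκ)⁻¹ * μ Bκ) *
          (ENNReal.ofReal (2 ^ p) * ENNReal.ofReal (κ ^ (s * p)) *
            ENNReal.ofReal c_μ ^ N) from by ring,
      ENNReal.inv_mul_cancel hcR0 hcRtop, ENNReal.inv_mul_cancel hμBκ0 hμBκtop, one_mul, one_mul,
      ← ENNReal.ofReal_pow hc0.le, ← ENNReal.ofReal_mul (by positivity),
      ← ENNReal.ofReal_mul (by positivity)]
  -- final assembly
  have main : (∫⁻ x in B \ F, w x ∂μ) ≤
      ENNReal.ofReal (2 ^ p * (2 * σ * κ) ^ (s * p) * c_μ ^ N) * G +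
        ENNReal.ofReal (1 + 3 ^ p * κ ^ (s * p) * c_μ ^ N) * I := by
    have hsplitset : (∫⁻ x in B \ F, w x ∂μ) ≤ I + ∫⁻ x in B \ Bκ, w x ∂μ := by
      calc (∫⁻ x in B \ F, w x ∂μ) ≤ ∫⁻ x in (Bκ \ F) ∪ (B \ Bκ), w x ∂μ := by
            refine lintegral_mono' (Measure.restrict_mono ?_ le_rfl) le_rfl
            intro x hx
            by_cases hxκ : x ∈ Bκ
            · exact Or.inl ⟨hxκ, hx.2⟩
            · exact Or.inr ⟨hx.1, hxκ⟩
        _ ≤ I + ∫⁻ x in B \ Bκ, w x ∂μ := lintegral_union_le _ _ _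
    have hannfinal : (∫⁻ x in B \ Bκ, w x ∂μ) ≤
        ENNReal.ofReal (2 ^ p * (2 * σ * κ) ^ (s * p) * c_μ ^ N) * G +
          ENNReal.ofReal (2 ^ p * κ ^ (s * p) * c_μ ^ N) * I := by
      calc (∫⁻ x in B \ Bκ, w x ∂μ)
          ≤ (cR⁻¹ * (μ Bκ)⁻¹) * (c1 * G + c2 * IW * (ENNReal.ofReal c_μ ^ N * μ Bκ)) := hannint
        _ = ((cR⁻¹ * (μ Bκ)⁻¹) * c1) * G +
            ((cR⁻¹ * (μ Bκ)⁻¹) * (c2 * (ENNReal.ofReal c_μ ^ N * μ Bκ))) * IW := by ring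
        _ = ENNReal.ofReal (2 ^ p * (2 * σ * κ) ^ (s * p) * c_μ ^ N) * G +
            ENNReal.ofReal (2 ^ p * κ ^ (s * p) * c_μ ^ N) * IW := by rw [hE1, hE2]
        _ ≤ ENNReal.ofReal (2 ^ p * (2 * σ * κ) ^ (s * p) * c_μ ^ N) * G +
            ENNReal.ofReal (2 ^ p * κ ^ (s * p) * c_μ ^ N) * I :=
            add_le_add_right (mul_le_mul_right hIWI _) _
    have hcoef2 : (1:ℝ≥0∞) + ENNReal.ofReal (2 ^ p * κ ^ (s * p) * c_μ ^ N) ≤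
        ENNReal.ofReal (1 + 3 ^ p * κ ^ (s * p) * c_μ ^ N) := by
      rw [ENNReal.ofReal_add (by norm_num) (by positivity), ENNReal.ofReal_one]
      refine add_le_add_right (ENNReal.ofReal_le_ofReal ?_) _
      have h23 : (2:ℝ) ^ p ≤ 3 ^ p := Real.rpow_le_rpow (by norm_num) (by norm_num) (by linarith)
      have hκp : (0:ℝ) ≤ κ ^ (s * p) := Real.rpow_nonneg hκ0.le _
      have hcn : (0:ℝ) ≤ c_μ ^ N := by positivity
      exact mul_le_mul_of_nonneg_right (mul_le_mul_of_nonneg_right h23 hκp) hcn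
    calc (∫⁻ x in B \ F, w x ∂μ) ≤ I + ∫⁻ x in B \ Bκ, w x ∂μ := hsplitset
      _ ≤ I + (ENNReal.ofReal (2 ^ p * (2 * σ * κ) ^ (s * p) * c_μ ^ N) * G +
          ENNReal.ofReal (2 ^ p * κ ^ (s * p) * c_μ ^ N) * I) := add_le_add_right hannfinal _
      _ = ENNReal.ofReal (2 ^ p * (2 * σ * κ) ^ (s * p) * c_μ ^ N) * G +
          ((1:ℝ≥0∞) + ENNReal.ofReal (2 ^ p * κ ^ (s * p) * c_μ ^ N)) * I := by ring
      _ ≤ ENNReal.ofReal (2 ^ p * (2 * σ * κ) ^ (s * p) * c_μ ^ N) * G +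
          ENNReal.ofReal (1 + 3 ^ p * κ ^ (s * p) * c_μ ^ N) * I :=
          add_le_add_right (mul_le_mul_left hcoef2 _) _
  simpa only [hw, hI, hG, hB, hBκ, hFdef] using main
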